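/- arXiv:2512.02929 — 4 statements merged into one kernel-verified Lean document; each statement's English description precedes it below -/
import Mathlib

section
/- For a connected undirected graph with Laplacian L and any zero-sum vector x (i.e., 1ᵀx = 0), and any vertex v, if L_v denotes the principal submatrix of L obtained by deleting the row and column of v (which is invertible), then the vector L†x, restricted to the coordinates other than v, equals L_v⁻¹ x^(−v) − (1/n)·1·(1ᵀ L_v⁻¹ x^(−v)), where x^(−v) is x with its v-th entry deleted and L† is the Moore–Penrose pseudoinverse of L. -/
open Matrix BigOperators

/-- `B` is the Moore–Penrose pseudoinverse of `A`. -/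
def IsMoorePenrose {n : Type*} [Fintype n] [DecidableEq n]
    (A B : Matrix n n ℝ) : Prop :=
  A * B * A = A ∧ B * A * B = B ∧ (A * B)ᵀ = A * B ∧ (B * A)ᵀ = B * A

private lemma sum_split_aux {n : ℕ} (v : Fin n) (f : Fin n → ℝ) :
    ∑ i, f i = (∑ u : {u : Fin n // u ≠ v}, f u.val) + f v := by
  rw [Finset.sum_eq_sum_sdiff_singleton_add (Finset.mem_univ v)]
  congr 1
  exact (Finset.sum_subtype (Finset.univ \ {v}) (fun x => by simp : ∀ x, x ∈ Finset.univ \ {v} ↔ x ≠ v) f)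

theorem stmt0 {n : ℕ} (G : SimpleGraph (Fin n)) [DecidableRel G.Adj]
    (hconn : G.Connected)
    (Ld : Matrix (Fin n) (Fin n) ℝ) (hLd : IsMoorePenrose (G.lapMatrix ℝ) Ld)
    (x : Fin n → ℝ) (hx : ∑ i, x i = 0)
    (v : Fin n)
    (Lv : Matrix {u : Fin n // u ≠ v} {u : Fin n // u ≠ v} ℝ)
    (hLv : Lv = (G.lapMatrix ℝ).submatrix (Subtype.val : {u : Fin n // u ≠ v} → Fin n) Subtype.val)
    (hinv : IsUnit Lv) :
    ∀ u : {u : Fin n // u ≠ v},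
      Ld.mulVec x u.val =
        Lv⁻¹.mulVec (fun w => x w.val) u
          - (1 / (n : ℝ)) * ∑ w, Lv⁻¹.mulVec (fun w => x w.val) w := by
  obtain ⟨h1, h2, h3, h4⟩ := hLd
  set L := G.lapMatrix ℝ with hL
  have hn : (0 : ℝ) < n := by
    exact_mod_cast Nat.cast_pos.mpr v.pos
  set z : {u : Fin n // u ≠ v} → ℝ := Lv⁻¹.mulVec (fun w => x w.val) with hz
  set zt : Fin n → ℝ := fun i => if h : i = v then 0 else z ⟨i, h⟩ with hzt
  have hztv : zt v = 0 := by simp [hzt]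
  have hzts : ∀ u : {u : Fin n // u ≠ v}, zt u.val = z u := by
    intro u; simp [hzt, u.2]
  have hLvz : Lv.mulVec z = fun w => x w.val := by
    rw [hz, mulVec_mulVec, Matrix.mul_nonsing_inv _ ((isUnit_iff_isUnit_det _).mp hinv),
      one_mulVec]
  -- L applied to constant ones is zero
  have hones : L.mulVec (fun _ => 1) = 0 := G.lapMatrix_mulVec_const_eq_zero
  have hsym : Lᵀ = L := G.isSymm_lapMatrix ℝ
  -- rows u ≠ v of L *ᵥ zt
  have hrow : ∀ u : {u : Fin n // u ≠ v}, L.mulVec zt u.val = x u.val := by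
    intro u
    have h := congrFun hLvz u
    rw [hLv] at h
    simp only [mulVec, dotProduct, submatrix_apply] at h ⊢
    rw [sum_split_aux v (fun i => L u.val i * zt i), hztv, mul_zero, add_zero, ← h]
    exact Finset.sum_congr rfl fun w _ => by rw [hzts]
  -- total sum of L *ᵥ zt is zero
  have hsum0 : ∀ y : Fin n → ℝ, ∑ i, L.mulVec y i = 0 := by
    intro y
    have : (fun _ => (1:ℝ)) ⬝ᵥ L.mulVec y = 0 := by
      rw [dotProduct_mulVec, ← mulVec_transpose, hsym, hones, zero_dotProduct]
    simpa [dotProduct] using this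
  -- hence L *ᵥ zt = x
  have hLzt : L.mulVec zt = x := by
    funext i
    by_cases hi : i = v
    · subst hi
      have e1 := hsum0 zt
      rw [sum_split_aux i (L.mulVec zt)] at e1
      rw [sum_split_aux i x] at hx
      have : ∑ u : {u : Fin n // u ≠ i}, L.mulVec zt u.val
          = ∑ u : {u : Fin n // u ≠ i}, x u.val :=
        Finset.sum_congr rfl fun u _ => hrow u
      linarith
    · exact hrow ⟨i, hi⟩
  -- the vector w := Ld * L *ᵥ zt
  set w : Fin n → ℝ := (Ld * L).mulVec zt with hw
  have hwx : Ld.mulVec x = w := by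
    rw [← hLzt, mulVec_mulVec]
  -- w - zt is in kernel of L
  have hker : L.mulVec (fun i => w i - zt i) = 0 := by
    have : L.mulVec w = L.mulVec zt := by
      rw [hw, mulVec_mulVec, ← Matrix.mul_assoc, h1]
    funext i
    have := congrFun this i
    simp only [mulVec, dotProduct] at this ⊢
    simp only [mul_sub, Finset.sum_sub_distrib, this, sub_self, Pi.zero_apply]
  -- connectivity: w - zt is constant
  have hconst : ∀ i : Fin n, w i - zt i = w v - zt v := by
    have := (G.lapMatrix_mulVec_eq_zero_iff_forall_reachable
      (x := fun i => w i - zt i)).mp hker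
    intro i
    exact this i v (hconn.preconnected i v)
  -- sum of w is zero
  have hws : ∑ i, w i = 0 := by
    have : (fun _ => (1:ℝ)) ⬝ᵥ w = 0 := by
      rw [hw, dotProduct_mulVec, ← mulVec_transpose, h4, ← mulVec_mulVec, hones,
        mulVec_zero, zero_dotProduct]
    simpa [dotProduct] using this
  -- compute the constant
  have hsumzt : ∑ i, zt i = ∑ u : {u : Fin n // u ≠ v}, z u := by
    rw [sum_split_aux v zt, hztv, add_zero]
    exact Finset.sum_congr rfl fun u _ => hzts u
  have hc : w v - zt v = -(1 / (n : ℝ)) * ∑ u : {u : Fin n // u ≠ v}, z u := by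
    have e : ∑ i, w i = (∑ i, zt i) + n * (w v - zt v) := by
      have : ∀ i, w i = zt i + (w v - zt v) := fun i => by linarith [hconst i]
      rw [Finset.sum_congr rfl fun i _ => this i, Finset.sum_add_distrib]
      simp [mul_comm]
      ring
    rw [hws, hsumzt] at e
    field_simp
    linarith
  intro u
  have := hconst u.val
  rw [hwx, hzts u] at *
  have : w u.val = z u + (w v - zt v) := by linarith [hconst u.val, hzts u]
  rw [this, hc, hz]
  ring
end

section
/- For a connected undirected graph with Laplacian L and any two vertices s, t, and any vertex v, the biharmonic distance satisfies b(s,t) = ‖L_v⁻¹(e_s − e_t)‖₂² − (1/n)(1ᵀ L_v⁻¹(e_s − e_t))², where b(s,t) = (e_s − e_t)ᵀ (L†)² (e_s − e_t) and L_v is the grounded Laplacian obtained by deleting row and column v (assuming s, t ≠ v). -/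
open Matrix BigOperators

lemma mp_unique {m : Type*} [Fintype m] [DecidableEq m] {A B C : Matrix m m ℝ}
    (hB : IsMoorePenrose A B) (hC : IsMoorePenrose A C) : B = C := by
  obtain ⟨hB1, hB2, hB3, hB4⟩ := hB
  obtain ⟨hC1, hC2, hC3, hC4⟩ := hC
  have hAt1 : Aᵀ = Aᵀ * (A * C) := by
    conv_lhs => rw [← hC1, transpose_mul, hC3]
  have hAB : A * B = A * C := by
    calc A * B = (A * B)ᵀ := hB3.symm
      _ = Bᵀ * Aᵀ := by rw [transpose_mul]
      _ = Bᵀ * (Aᵀ * (A * C)) := by rw [← hAt1]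
      _ = (Bᵀ * Aᵀ) * (A * C) := by simp only [Matrix.mul_assoc]
      _ = (A * B)ᵀ * (A * C) := by rw [transpose_mul]
      _ = (A * B) * (A * C) := by rw [hB3]
      _ = (A * B * A) * C := by simp only [Matrix.mul_assoc]
      _ = A * C := by rw [hB1]
  have hAt2 : Aᵀ = (C * A) * Aᵀ := by
    conv_lhs => rw [← hC1, Matrix.mul_assoc, transpose_mul, hC4]
  have hBA : B * A = C * A := by
    calc B * A = (B * A)ᵀ := hB4.symm
      _ = Aᵀ * Bᵀ := by rw [transpose_mul]
      _ = ((C * A) * Aᵀ) * Bᵀ := by rw [← hAt2]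
      _ = (C * A) * (Aᵀ * Bᵀ) := by simp only [Matrix.mul_assoc]
      _ = (C * A) * (B * A)ᵀ := by rw [transpose_mul]
      _ = (C * A) * (B * A) := by rw [hB4]
      _ = C * (A * B * A) := by simp only [Matrix.mul_assoc]
      _ = C * A := by rw [hB1]
  calc B = B * A * B := hB2.symm
    _ = C * A * B := by rw [hBA]
    _ = C * (A * B) := by rw [Matrix.mul_assoc]
    _ = C * (A * C) := by rw [hAB]
    _ = C * A * C := by rw [Matrix.mul_assoc]
    _ = C := hC2

lemma mp_symm {m : Type*} [Fintype m] [DecidableEq m] {A B : Matrix m m ℝ}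
    (hA : Aᵀ = A) (h : IsMoorePenrose A B) : Bᵀ = B := by
  obtain ⟨h1, h2, h3, h4⟩ := h
  have hBt : IsMoorePenrose A Bᵀ := by
    refine ⟨?_, ?_, ?_, ?_⟩
    · calc A * Bᵀ * A = Aᵀ * Bᵀ * Aᵀ := by rw [hA]
        _ = (A * (B * A))ᵀ := by rw [transpose_mul, transpose_mul, Matrix.mul_assoc]
        _ = (A * B * A)ᵀ := by rw [Matrix.mul_assoc]
        _ = A := by rw [h1, hA]
    · calc Bᵀ * A * Bᵀ = Bᵀ * Aᵀ * Bᵀ := by rw [hA]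
        _ = (B * (A * B))ᵀ := by rw [transpose_mul, transpose_mul, Matrix.mul_assoc]
        _ = (B * A * B)ᵀ := by rw [Matrix.mul_assoc]
        _ = Bᵀ := by rw [h2]
    · calc (A * Bᵀ)ᵀ = B * Aᵀ := by rw [transpose_mul, transpose_transpose]
        _ = B * A := by rw [hA]
        _ = (B * A)ᵀ := h4.symm
        _ = Aᵀ * Bᵀ := by rw [transpose_mul]
        _ = A * Bᵀ := by rw [hA]
    · calc (Bᵀ * A)ᵀ = Aᵀ * B := by rw [transpose_mul, transpose_transpose]
        _ = A * B := by rw [hA]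
        _ = (A * B)ᵀ := h3.symm
        _ = Bᵀ * Aᵀ := by rw [transpose_mul]
        _ = Bᵀ * A := by rw [hA]
  exact mp_unique hBt ⟨h1, h2, h3, h4⟩

lemma sum_split {n : ℕ} (f : Fin n → ℝ) (v : Fin n) :
    ∑ u, f u = f v + ∑ u : {u : Fin n // u ≠ v}, f u.val := by
  rw [← Finset.add_sum_erase _ f (Finset.mem_univ v)]
  congr 1
  exact Finset.sum_subtype _ (fun x => by simp [Finset.mem_erase]) f

theorem stmt1 {n : ℕ} (G : SimpleGraph (Fin n)) [DecidableRel G.Adj]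
    (hconn : G.Connected)
    (Ld : Matrix (Fin n) (Fin n) ℝ) (hLd : IsMoorePenrose (G.lapMatrix ℝ) Ld)
    (s t v : Fin n) (hs : s ≠ v) (ht : t ≠ v)
    (Lv : Matrix {u : Fin n // u ≠ v} {u : Fin n // u ≠ v} ℝ)
    (hLv : Lv = (G.lapMatrix ℝ).submatrix
      (Subtype.val : {u : Fin n // u ≠ v} → Fin n) Subtype.val)
    (hinv : IsUnit Lv)
    (x : Fin n → ℝ)
    (hxdef : x = fun i => (if i = s then (1 : ℝ) else 0) - (if i = t then 1 else 0)) :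
    x ⬝ᵥ (Ld * Ld).mulVec x =
      ∑ w, (Lv⁻¹.mulVec (fun u => x u.val) w) ^ 2
        - (1 / (n : ℝ)) * (∑ w, Lv⁻¹.mulVec (fun u => x u.val) w) ^ 2 := by
  set A := G.lapMatrix ℝ with hAdef
  obtain ⟨h1, h2, h3, h4⟩ := hLd
  have hA : Aᵀ = A := G.isSymm_lapMatrix ℝ
  have hBsymm : Ldᵀ = Ld := mp_symm hA ⟨h1, h2, h3, h4⟩
  have hnpos : (0 : ℝ) < n := by
    have : 0 < n := Fin.pos_iff_nonempty.mpr ⟨v⟩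
    exact_mod_cast this
  have hdet : IsUnit Lv.det := Lv.isUnit_iff_isUnit_det.mp hinv
  set x' : {u : Fin n // u ≠ v} → ℝ := fun u => x u.val with hx'
  set z : Fin n → ℝ := fun u => if h : u = v then 0 else Lv⁻¹.mulVec x' ⟨u, h⟩ with hzdef
  have hzv : z v = 0 := by simp [hzdef]
  have hzsub : ∀ w : {u : Fin n // u ≠ v}, z w.val = Lv⁻¹.mulVec x' w := by
    intro w
    simp only [hzdef, dif_neg w.prop]
  have hxv : x v = 0 := by
    simp [hxdef, Ne.symm hs, Ne.symm ht]
  have hsumx : ∑ u, x u = 0 := by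
    simp [hxdef, Finset.sum_sub_distrib]
  -- column sums of A are zero
  have hA1 : A *ᵥ (fun _ => (1 : ℝ)) = 0 := G.lapMatrix_mulVec_const_eq_zero
  have hcol : (fun _ : Fin n => (1 : ℝ)) ᵥ* A = 0 := by
    rw [← hA, vecMul_transpose, hA1]
  have hsum_mulVec : ∀ M : Matrix (Fin n) (Fin n) ℝ, ∀ y : Fin n → ℝ,
      ∑ u, (M *ᵥ y) u = ((fun _ : Fin n => (1 : ℝ)) ᵥ* M) ⬝ᵥ y := by
    intro M y
    rw [← dotProduct_mulVec]
    simp [dotProduct]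
  -- A *ᵥ z = x
  have hAzne : ∀ u (hu : u ≠ v), (A *ᵥ z) u = x u := by
    intro u hu
    have : (A *ᵥ z) u = ∑ w, A u w * z w := rfl
    rw [this, sum_split (fun w => A u w * z w) v]
    rw [hzv, mul_zero, zero_add]
    have : ∀ w : {u : Fin n // u ≠ v}, A u w.val * z w.val
        = Lv ⟨u, hu⟩ w * Lv⁻¹.mulVec x' w := by
      intro w
      rw [hzsub, hLv]
      rfl
    rw [Finset.sum_congr rfl (fun w _ => this w)]
    have : ∑ w, Lv ⟨u, hu⟩ w * Lv⁻¹.mulVec x' w = (Lv *ᵥ (Lv⁻¹ *ᵥ x')) ⟨u, hu⟩ := rfl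
    rw [this, mulVec_mulVec, Matrix.mul_nonsing_inv _ hdet, one_mulVec]
  have hsumAz : ∑ u, (A *ᵥ z) u = 0 := by
    rw [hsum_mulVec, hcol, zero_dotProduct]
  have hAz : A *ᵥ z = x := by
    funext u
    by_cases hu : u = v
    · subst hu
      have hsplit := sum_split (fun u => (A *ᵥ z) u) u
      rw [hsumAz] at hsplit
      have hrest : ∑ w : {w : Fin n // w ≠ u}, (A *ᵥ z) w.val
          = ∑ w : {w : Fin n // w ≠ u}, x w.val := by
        exact Finset.sum_congr rfl (fun w _ => hAzne w.val w.prop)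
      have hsplitx := sum_split x u
      rw [hsumx, hxv] at hsplitx
      rw [hrest] at hsplit
      rw [hxv]
      linarith
    · exact hAzne u hu
  -- w := Ld *ᵥ x
  set w : Fin n → ℝ := Ld *ᵥ x with hwdef
  have hAw : A *ᵥ w = x := by
    rw [hwdef, ← hAz, mulVec_mulVec, mulVec_mulVec, h1]
  have hdiffzero : A *ᵥ (w - z) = 0 := by
    rw [mulVec_sub, hAw, hAz, sub_self]
  have hcst : ∀ i j : Fin n, (w - z) i = (w - z) j := by
    intro i j
    have h := (G.lapMatrix_mulVec_eq_zero_iff_forall_reachable (x := w - z)).mp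
      (by exact hdiffzero)
    exact h i j (hconn i j)
  set c : ℝ := w v with hcdef
  have hwz : ∀ u, w u = z u + c := by
    intro u
    have h := hcst u v
    simp only [Pi.sub_apply] at h
    rw [hzv] at h
    linarith
  have hsumw : ∑ u, w u = 0 := by
    rw [hwdef, ← hAz, mulVec_mulVec, hsum_mulVec]
    have : (fun _ : Fin n => (1 : ℝ)) ᵥ* (Ld * A) = 0 := by
      rw [← h4, vecMul_transpose, ← mulVec_mulVec, hA1, mulVec_zero]
    rw [this, zero_dotProduct]
  set S : ℝ := ∑ u, z u with hSdef
  have hSc : S + n * c = 0 := by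
    have : ∑ u, w u = ∑ u, (z u + c) := Finset.sum_congr rfl (fun u _ => hwz u)
    rw [hsumw] at this
    rw [Finset.sum_add_distrib, Finset.sum_const, Finset.card_univ, Fintype.card_fin,
      nsmul_eq_mul] at this
    rw [hSdef]
    linarith
  have hc : c = -S / n := by
    field_simp
    linarith
  -- LHS = w ⬝ᵥ w
  have hLHS : x ⬝ᵥ (Ld * Ld).mulVec x = w ⬝ᵥ w := by
    rw [← mulVec_mulVec, dotProduct_mulVec, ← mulVec_transpose, hBsymm]
  rw [hLHS]
  have hww : w ⬝ᵥ w = ∑ u, (z u + c) ^ 2 := by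
    simp only [dotProduct]
    refine Finset.sum_congr rfl (fun u _ => ?_)
    rw [hwz u]
    ring
  rw [hww]
  have hexp : ∑ u, (z u + c) ^ 2 = (∑ u, z u ^ 2) + 2 * c * S + n * c ^ 2 := by
    have : ∀ u, (z u + c) ^ 2 = z u ^ 2 + 2 * c * z u + c ^ 2 := fun u => by ring
    rw [Finset.sum_congr rfl (fun u _ => this u)]
    rw [Finset.sum_add_distrib, Finset.sum_add_distrib, Finset.sum_const, Finset.card_univ,
      Fintype.card_fin, nsmul_eq_mul, ← Finset.mul_sum, ← hSdef]
    try ring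
  rw [hexp]
  -- relate subtype sums to full sums
  have hsq : ∑ u : {u : Fin n // u ≠ v}, (Lv⁻¹.mulVec x' u) ^ 2 = ∑ u, z u ^ 2 := by
    rw [sum_split (fun u => z u ^ 2) v, hzv]
    have h0 : (0 : ℝ) ^ 2 = 0 := by norm_num
    rw [h0, zero_add]
    refine Finset.sum_congr rfl fun u _ => ?_
    show (Lv⁻¹.mulVec x' u) ^ 2 = z u.val ^ 2
    rw [hzsub u]
  have hS' : ∑ u : {u : Fin n // u ≠ v}, Lv⁻¹.mulVec x' u = S := by
    rw [hSdef, sum_split z v, hzv, zero_add]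
    refine Finset.sum_congr rfl fun u _ => ?_
    show Lv⁻¹.mulVec x' u = z u.val
    rw [hzsub u]
  rw [hsq, hS']
  rw [hc]
  field_simp
  ring
end

section
/- Suppose v is a cut vertex of a connected graph G separating the remaining vertices into two components V_s and V_t with s ∈ V_s and t ∈ V_t. Then the grounded Laplacian L_v, after ordering vertices as (V_s, V_t), is block diagonal with blocks L_{V_s} and L_{V_t}, and the biharmonic distance satisfies b(s,t) = ‖L_{V_s}⁻¹ e_s − L_{V_t}⁻¹ e_t‖₂² − (1/n)(1ᵀ(L_{V_s}⁻¹ e_s − L_{V_t}⁻¹ e_t))², where L_{V_s}⁻¹ e_s and L_{V_t}⁻¹ e_t are extended by zeros to the complementary component. -/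
open Matrix BigOperators

lemma mp_transpose {m : Type*} [Fintype m] [DecidableEq m] {A B : Matrix m m ℝ}
    (hA : Aᵀ = A) (hB : IsMoorePenrose A B) : IsMoorePenrose A Bᵀ := by
  obtain ⟨h1, h2, h3, h4⟩ := hB
  refine ⟨?_, ?_, ?_, ?_⟩
  · have := congrArg Matrix.transpose h1
    simpa [Matrix.transpose_mul, Matrix.mul_assoc, hA] using this
  · have := congrArg Matrix.transpose h2
    simpa [Matrix.transpose_mul, Matrix.mul_assoc, hA] using this
  · -- (A * Bᵀ)ᵀ = A * Bᵀ ;  A * Bᵀ = (B * Aᵀ)ᵀ = (B*A)ᵀ = B*A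
    have e : A * Bᵀ = B * A := by
      calc A * Bᵀ = (B * Aᵀ)ᵀ := by simp [Matrix.transpose_mul]
      _ = (B * A)ᵀ := by rw [hA]
      _ = B * A := h4
    rw [e, h4]
  · have e : Bᵀ * A = A * B := by
      calc Bᵀ * A = (Aᵀ * B)ᵀ := by simp [Matrix.transpose_mul]
      _ = (A * B)ᵀ := by rw [hA]
      _ = A * B := h3
    rw [e, h3]

theorem stmt3 {n : ℕ} (G : SimpleGraph (Fin n)) [DecidableRel G.Adj]
    (hconn : G.Connected)
    (Ld : Matrix (Fin n) (Fin n) ℝ) (hLd : IsMoorePenrose (G.lapMatrix ℝ) Ld)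
    (v s t : Fin n) (Vs Vt : Finset (Fin n))
    (hs : s ∈ Vs) (ht : t ∈ Vt) (hdisj : Disjoint Vs Vt)
    (hv : v ∉ Vs) (hv' : v ∉ Vt)
    (hcover : ∀ u : Fin n, u ≠ v → u ∈ Vs ∨ u ∈ Vt)
    -- removing `v` disconnects `Vs` from `Vt`
    (hsep : ∀ a ∈ Vs, ∀ b ∈ Vt, ¬ G.Adj a b)
    -- `Vs` and `Vt` are (unions of) connected components of `G - v`,
    -- in particular every vertex of them is connected within its own side
    (LVs : Matrix Vs Vs ℝ)
    (hLVs : LVs = (G.lapMatrix ℝ).submatrix (Subtype.val : Vs → Fin n) Subtype.val)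
    (LVt : Matrix Vt Vt ℝ)
    (hLVt : LVt = (G.lapMatrix ℝ).submatrix (Subtype.val : Vt → Fin n) Subtype.val)
    (hinvs : IsUnit LVs) (hinvt : IsUnit LVt)
    (es : Vs → ℝ) (hes : es = fun (u : Vs) => if (u : Fin n) = s then 1 else 0)
    (et : Vt → ℝ) (het : et = fun (u : Vt) => if (u : Fin n) = t then 1 else 0)
    -- `f` is `L_{Vs}⁻¹ e_s − L_{Vt}⁻¹ e_t`, both extended by zeros
    (f : Fin n → ℝ)
    (hf : f = fun w =>
      (if h : w ∈ Vs then LVs⁻¹.mulVec es ⟨w, h⟩ else 0)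
        - (if h : w ∈ Vt then LVt⁻¹.mulVec et ⟨w, h⟩ else 0))
    (x : Fin n → ℝ)
    (hx : x = fun i => (if i = s then (1 : ℝ) else 0) - (if i = t then 1 else 0)) :
    -- the grounded Laplacian is block diagonal w.r.t. (Vs, Vt)
    (∀ a ∈ Vs, ∀ b ∈ Vt, G.lapMatrix ℝ a b = 0) ∧
    -- and the biharmonic distance formula
      x ⬝ᵥ (Ld * Ld).mulVec x =
        ∑ w, (f w) ^ 2 - (1 / (n : ℝ)) * (∑ w, f w) ^ 2 := by
  set L := G.lapMatrix ℝ with hL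
  have hn : (0:ℕ) < n := Fin.pos s
  have hn' : (n:ℝ) ≠ 0 := by positivity
  have hAsymm : Lᵀ = L := G.isSymm_lapMatrix (R := ℝ)
  have hLentry : ∀ a b : Fin n, a ≠ b → ¬ G.Adj a b → L a b = 0 := by
    intro a b hab hadj
    simp [hL, SimpleGraph.lapMatrix, SimpleGraph.degMatrix, hab, hadj]
  -- first conjunct
  have hblock : ∀ a ∈ Vs, ∀ b ∈ Vt, L a b = 0 := by
    intro a ha b hb
    exact hLentry a b (fun h => (Finset.disjoint_left.mp hdisj ha) (h ▸ hb)) (hsep a ha b hb)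
  have hblock' : ∀ a ∈ Vt, ∀ b ∈ Vs, L a b = 0 := by
    intro a ha b hb
    refine hLentry a b (fun h => ?_) (fun h => hsep b hb a ha h.symm)
    subst h
    exact Finset.disjoint_left.mp hdisj hb ha
  refine ⟨hblock, ?_⟩
  -- distinctness facts
  have hst : s ≠ t := fun h => Finset.disjoint_left.mp hdisj hs (h ▸ ht)
  have hsv : s ≠ v := fun h => hv (h ▸ hs)
  have htv : t ≠ v := fun h => hv' (h ▸ ht)
  obtain ⟨h1, h2, h3, h4⟩ := hLd
  -- symmetry of Ld
  have hLdsymm : Ldᵀ = Ld := mp_unique (mp_transpose hAsymm ⟨h1,h2,h3,h4⟩) ⟨h1,h2,h3,h4⟩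
  -- row and column sums of L vanish
  have hrow : ∀ w, ∑ u, L w u = 0 := by
    intro w
    have := congrFun (G.lapMatrix_mulVec_const_eq_zero (R := ℝ)) w
    simpa [Matrix.mulVec, dotProduct] using this
  have hcol : ∀ u, ∑ w, L w u = 0 := by
    intro u
    have : ∀ w, L w u = L u w := fun w => by
      simpa using congrFun (congrFun hAsymm u) w
    simp_rw [this]
    exact hrow u
  -- L *ᵥ f = x
  have hdets : IsUnit LVs.det := (Matrix.isUnit_iff_isUnit_det LVs).mp hinvs
  have hdett : IsUnit LVt.det := (Matrix.isUnit_iff_isUnit_det LVt).mp hinvt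
  have hgs : LVs *ᵥ (LVs⁻¹ *ᵥ es) = es := by
    rw [Matrix.mulVec_mulVec, Matrix.mul_nonsing_inv _ hdets, Matrix.one_mulVec]
  have hgt : LVt *ᵥ (LVt⁻¹ *ᵥ et) = et := by
    rw [Matrix.mulVec_mulVec, Matrix.mul_nonsing_inv _ hdett, Matrix.one_mulVec]
  have hLf_ne : ∀ w, w ≠ v → (L *ᵥ f) w = x w := by
    intro w hwv
    have hsplit : (L *ᵥ f) w =
        (∑ u, L w u * (if h : u ∈ Vs then LVs⁻¹.mulVec es ⟨u, h⟩ else 0))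
        - (∑ u, L w u * (if h : u ∈ Vt then LVt⁻¹.mulVec et ⟨u, h⟩ else 0)) := by
      rw [hf]
      simp [Matrix.mulVec, dotProduct, mul_sub, Finset.sum_sub_distrib]
    have sumVs : (∑ u, L w u * (if h : u ∈ Vs then LVs⁻¹.mulVec es ⟨u, h⟩ else 0))
        = ∑ u : Vs, L w u * (LVs⁻¹.mulVec es u) := by
      rw [← Finset.sum_subset (Finset.subset_univ Vs)]
      · rw [← Finset.sum_attach Vs]
        apply Finset.sum_congr rfl
        intro u _
        rw [dif_pos u.2]
      · intro u _ hu
        rw [dif_neg hu, mul_zero]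
    have sumVt : (∑ u, L w u * (if h : u ∈ Vt then LVt⁻¹.mulVec et ⟨u, h⟩ else 0))
        = ∑ u : Vt, L w u * (LVt⁻¹.mulVec et u) := by
      rw [← Finset.sum_subset (Finset.subset_univ Vt)]
      · rw [← Finset.sum_attach Vt]
        apply Finset.sum_congr rfl
        intro u _
        rw [dif_pos u.2]
      · intro u _ hu
        rw [dif_neg hu, mul_zero]
    rcases hcover w hwv with hw | hw
    · -- w ∈ Vs
      have e1 : (∑ u : Vs, L w (u:Fin n) * (LVs⁻¹.mulVec es u)) = es ⟨w, hw⟩ := by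
        have := congrFun hgs ⟨w, hw⟩
        rw [← this]
        simp [Matrix.mulVec, dotProduct, hLVs, Matrix.submatrix_apply]
      have e2 : (∑ u : Vt, L w (u:Fin n) * (LVt⁻¹.mulVec et u)) = 0 := by
        apply Finset.sum_eq_zero
        intro u _
        rw [hblock w hw u u.2, zero_mul]
      have hwt : w ≠ t := fun h => Finset.disjoint_left.mp hdisj hw (h ▸ ht)
      rw [hsplit, sumVs, sumVt, e1, e2, hx, hes]
      simp [hwt]
    · -- w ∈ Vt
      have e1 : (∑ u : Vs, L w (u:Fin n) * (LVs⁻¹.mulVec es u)) = 0 := by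
        apply Finset.sum_eq_zero
        intro u _
        rw [hblock' w hw u u.2, zero_mul]
      have e2 : (∑ u : Vt, L w (u:Fin n) * (LVt⁻¹.mulVec et u)) = et ⟨w, hw⟩ := by
        have := congrFun hgt ⟨w, hw⟩
        rw [← this]
        simp [Matrix.mulVec, dotProduct, hLVt, Matrix.submatrix_apply]
      have hws : w ≠ s := fun h => Finset.disjoint_left.mp hdisj (h ▸ hs) hw
      rw [hsplit, sumVs, sumVt, e1, e2, hx, het]
      simp [hws]
  have hsumx : ∑ w, x w = 0 := by
    rw [hx]
    simp [Finset.sum_sub_distrib]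
  have hxv : x v = 0 := by
    rw [hx]; simp [hsv.symm, htv.symm]
  have hsumLf : ∑ w, (L *ᵥ f) w = 0 := by
    simp only [Matrix.mulVec, dotProduct]
    rw [Finset.sum_comm]
    apply Finset.sum_eq_zero
    intro u _
    rw [← Finset.sum_mul, hcol u, zero_mul]
  have hLf : L *ᵥ f = x := by
    funext w
    by_cases hwv : w = v
    · rw [hwv]
      have h5 : ∑ w ∈ Finset.univ.erase v, (L *ᵥ f) w = ∑ w ∈ Finset.univ.erase v, x w := by
        apply Finset.sum_congr rfl
        intro u hu
        exact hLf_ne u (Finset.ne_of_mem_erase hu)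
      have e6 : ∑ w ∈ Finset.univ.erase v, (L *ᵥ f) w = - (L *ᵥ f) v + ∑ w, (L *ᵥ f) w := by
        rw [Finset.sum_erase_eq_sub (Finset.mem_univ v)]; ring
      have e7 : ∑ w ∈ Finset.univ.erase v, x w = - x v + ∑ w, x w := by
        rw [Finset.sum_erase_eq_sub (Finset.mem_univ v)]; ring
      rw [e6, e7, hsumLf, hsumx, hxv] at h5
      linarith
    · exact hLf_ne w hwv
  -- the projection argument
  set c : ℝ := (∑ w, f w) / n with hc
  set g : Fin n → ℝ := fun w => f w - c with hg
  have hLg : L *ᵥ g = x := by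
    have : g = f - c • (fun _ => (1:ℝ)) := by
      funext w; simp [hg, smul_eq_mul]
    rw [this, Matrix.mulVec_sub, Matrix.mulVec_smul, G.lapMatrix_mulVec_const_eq_zero, hLf]
    simp
  have hsumg : ∑ w, g w = 0 := by
    simp only [hg]
    rw [Finset.sum_sub_distrib, hc]
    rw [Finset.sum_const, Finset.card_univ, Fintype.card_fin, nsmul_eq_mul]
    field_simp
    ring
  set p : Fin n → ℝ := Ld *ᵥ x with hp
  have hLp : L *ᵥ p = x := by
    rw [hp, ← hLg, Matrix.mulVec_mulVec, Matrix.mulVec_mulVec, h1]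
  have hker : L *ᵥ (g - p) = 0 := by
    rw [Matrix.mulVec_sub, hLg, hLp, sub_self]
  have hconst : ∀ i j : Fin n, (g - p) i = (g - p) j := by
    intro i j
    have := (G.lapMatrix_mulVec_eq_zero_iff_forall_reachable (x := g - p)).mp
      (by exact hker)
    exact this i j (hconn.preconnected i j)
  have hsump : ∑ w, p w = 0 := by
    have key : (Ld * L) *ᵥ (fun _ => (1:ℝ)) = 0 := by
      rw [← Matrix.mulVec_mulVec, G.lapMatrix_mulVec_const_eq_zero, Matrix.mulVec_zero]
    have : ∑ w, p w = (fun _ => (1:ℝ)) ⬝ᵥ p := by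
      simp [dotProduct]
    rw [this, hp, ← hLg, Matrix.mulVec_mulVec, dotProduct_mulVec,
      ← Matrix.mulVec_transpose, show (Ld * L)ᵀ = Ld * L from h4, key]
    simp [dotProduct]
  have hgp : g = p := by
    have hsum0 : ∑ w, ((g - p) w) = 0 := by
      simp only [Pi.sub_apply]
      rw [Finset.sum_sub_distrib, hsumg, hsump, sub_self]
    have : (n:ℝ) * ((g - p) v) = 0 := by
      rw [← hsum0]
      rw [Finset.sum_congr rfl (fun w _ => hconst w v)]
      simp [mul_comm]
      ring
    have h0 : (g - p) v = 0 := by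
      rcases mul_eq_zero.mp this with h | h
      · exact absurd h hn'
      · exact h
    funext w
    have := hconst w v
    rw [h0] at this
    simpa [sub_eq_zero] using this
  -- final computation
  have hmain : x ⬝ᵥ (Ld * Ld) *ᵥ x = g ⬝ᵥ g := by
    rw [← Matrix.mulVec_mulVec, dotProduct_mulVec, ← Matrix.mulVec_transpose,
      hLdsymm, ← hp, ← hgp]
  rw [hmain]
  have expand : g ⬝ᵥ g = ∑ w, (f w - c)^2 := by
    simp [dotProduct, hg, sq]
  rw [expand]
  have : ∑ w, (f w - c)^2 = ∑ w, (f w)^2 - 2 * c * (∑ w, f w) + n * c^2 := by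
    have : ∀ w, (f w - c)^2 = (f w)^2 - 2 * c * f w + c^2 := fun w => by ring
    simp_rw [this]
    rw [Finset.sum_add_distrib, Finset.sum_sub_distrib, ← Finset.mul_sum]
    simp [Finset.card_univ]
  rw [this, hc]
  field_simp
  ring
end

section
/- Let L be the Laplacian of a connected graph on n vertices and L† its Moore–Penrose pseudoinverse. For any zero-sum vector x, ‖L†x‖₂² = ‖L_v⁻¹x^(−v)‖₂² − (1/n)(1ᵀL_v⁻¹x^(−v))² for every vertex v, where L_v is the grounded Laplacian at v and x^(−v) is x with entry v deleted. -/
open Matrix BigOperators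

theorem stmt6 {n : ℕ} (G : SimpleGraph (Fin n)) [DecidableRel G.Adj]
    (hconn : G.Connected)
    (Ld : Matrix (Fin n) (Fin n) ℝ) (hLd : IsMoorePenrose (G.lapMatrix ℝ) Ld)
    (x : Fin n → ℝ) (hx : ∑ i, x i = 0)
    (v : Fin n)
    (Lv : Matrix {u : Fin n // u ≠ v} {u : Fin n // u ≠ v} ℝ)
    (hLv : Lv = (G.lapMatrix ℝ).submatrix
      (Subtype.val : {u : Fin n // u ≠ v} → Fin n) Subtype.val)
    (hinv : IsUnit Lv) :
    ∑ i, (Ld.mulVec x i) ^ 2 =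
      ∑ w, (Lv⁻¹.mulVec (fun u => x u.val) w) ^ 2
        - (1 / (n : ℝ)) * (∑ w, Lv⁻¹.mulVec (fun u => x u.val) w) ^ 2 := by
  classical
  set L := G.lapMatrix ℝ with hL
  set z : {u : Fin n // u ≠ v} → ℝ := Lv⁻¹.mulVec (fun u => x u.val) with hz
  -- split-sum helper
  have sum_split : ∀ f : Fin n → ℝ,
      ∑ i, f i = f v + ∑ j : {u : Fin n // u ≠ v}, f j.val := by
    intro f
    rw [Fintype.sum_eq_add_sum_compl v f]
    congr 1
    exact Finset.sum_subtype _ (by simp) f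
  set w : Fin n → ℝ := fun i => if h : i = v then 0 else z ⟨i, h⟩ with hw
  have hwv : w v = 0 := by simp [hw]
  have hwj : ∀ j : {u : Fin n // u ≠ v}, w j.val = z j := by
    intro j; simp [hw, j.prop]
  -- Lv z = x restricted
  have hLvz : Lv.mulVec z = fun u => x u.val := by
    rw [hz, Matrix.mulVec_mulVec, Matrix.mul_nonsing_inv _ ((Matrix.isUnit_iff_isUnit_det Lv).mp hinv),
      Matrix.one_mulVec]
  -- L w = x off v
  have hLw_ne : ∀ u : Fin n, u ≠ v → L.mulVec w u = x u := by
    intro u hu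
    have h0 := congrFun hLvz ⟨u, hu⟩
    rw [hLv] at h0
    simp only [Matrix.mulVec, dotProduct, Matrix.submatrix_apply] at h0
    simp only [Matrix.mulVec, dotProduct]
    rw [sum_split (fun j => L u j * w j), hwv, mul_zero, zero_add]
    simp only [hwj]
    exact h0
  -- columns of L sum to zero
  have hcolsum : ∀ j : Fin n, ∑ i, L i j = 0 := by
    intro j
    have h1 : L.mulVec (fun _ => 1) = 0 := G.lapMatrix_mulVec_const_eq_zero
    have h2 : ∀ i, L i j = L j i := fun i =>
      congrFun (congrFun (G.isSymm_lapMatrix (R := ℝ)) j) i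
    calc ∑ i, L i j = ∑ i, L j i := by simp_rw [h2]
    _ = L.mulVec (fun _ => 1) j := by simp [Matrix.mulVec, dotProduct]
    _ = 0 := by rw [h1]; rfl
  have hsumLw : ∑ i, L.mulVec w i = 0 := by
    simp_rw [Matrix.mulVec, dotProduct]
    rw [Finset.sum_comm]
    simp_rw [← Finset.sum_mul, hcolsum]
    simp
  -- L w = x everywhere
  have hLw : L.mulVec w = x := by
    funext u
    by_cases hu : u = v
    · rw [hu]
      have e1 := sum_split (L.mulVec w)
      have e2 := sum_split x
      rw [hsumLw] at e1
      rw [hx] at e2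
      have : ∑ j : {a : Fin n // a ≠ v}, L.mulVec w j.val
          = ∑ j : {a : Fin n // a ≠ v}, x j.val :=
        Finset.sum_congr rfl (fun j _ => hLw_ne j.val j.prop)
      linarith
    · exact hLw_ne u hu
  set y : Fin n → ℝ := Ld.mulVec x with hy
  have hyw : y = (Ld * L).mulVec w := by
    rw [hy, ← hLw, Matrix.mulVec_mulVec]
  -- L (y - w) = 0
  have hker : L.mulVec (y - w) = 0 := by
    rw [Matrix.mulVec_sub, hyw, Matrix.mulVec_mulVec, ← Matrix.mul_assoc, hLd.1, hLw, sub_self]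
  -- y - w constant
  have hconst : ∀ i, y i - w i = y v - w v := by
    have := (G.lapMatrix_mulVec_eq_zero_iff_forall_reachable (x := y - w)).mp
      hker
    intro i
    exact this i v (hconn.preconnected i v)
  -- sum of y is zero
  have hsumy : ∑ i, y i = 0 := by
    have h1 : (fun _ => (1 : ℝ)) ᵥ* (Ld * L) = 0 := by
      rw [← hLd.2.2.2, Matrix.vecMul_transpose, ← Matrix.mulVec_mulVec,
        G.lapMatrix_mulVec_const_eq_zero, Matrix.mulVec_zero]
    calc ∑ i, y i = (fun _ => (1 : ℝ)) ⬝ᵥ ((Ld * L).mulVec w) := by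
          rw [← hyw]; simp [dotProduct]
    _ = ((fun _ => (1 : ℝ)) ᵥ* (Ld * L)) ⬝ᵥ w := dotProduct_mulVec _ _ _
    _ = 0 := by rw [h1]; simp
  have hn : (0 : ℝ) < n := by exact_mod_cast v.pos
  set s : ℝ := ∑ j : {u : Fin n // u ≠ v}, z j with hs
  have hsumw : ∑ i, w i = s := by
    rw [sum_split w, hwv, zero_add, hs]
    exact Finset.sum_congr rfl (fun j _ => hwj j)
  have hsumw2 : ∑ i, (w i) ^ 2 = ∑ j : {u : Fin n // u ≠ v}, z j ^ 2 := by
    rw [sum_split (fun i => w i ^ 2), hwv]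
    rw [zero_pow (by norm_num), zero_add]
    exact Finset.sum_congr rfl (fun j _ => by rw [hwj j])
  set c : ℝ := y v - w v with hc
  have hyi : ∀ i, y i = w i + c := fun i => by have := hconst i; linarith
  have hcval : c = -s / n := by
    have h1 : ∑ i, y i = s + n * c := by
      simp_rw [hyi]
      rw [Finset.sum_add_distrib, hsumw, Finset.sum_const, Finset.card_fin, nsmul_eq_mul]
    rw [hsumy] at h1
    field_simp
    linarith
  have hy2 : ∑ i, y i ^ 2 = (∑ j : {u : Fin n // u ≠ v}, z j ^ 2) + 2 * c * s + n * c ^ 2 := by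
    simp_rw [hyi, add_sq]
    rw [Finset.sum_add_distrib, Finset.sum_add_distrib, hsumw2, Finset.sum_const,
      Finset.card_fin, nsmul_eq_mul, ← Finset.sum_mul, ← Finset.mul_sum, hsumw]
    ring
  show ∑ i, y i ^ 2 = (∑ j : {u : Fin n // u ≠ v}, z j ^ 2) - 1 / n * s ^ 2
  rw [hy2, hcval]
  field_simp
  ring
end
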